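/- Let P be a polynomial in n complex variables with homogeneous expansion P = ∑_{m≥0} P_m. If sup_{z ∈ 𝔻ⁿ} |P(z)| ≤ 1, then for every m > 0, sup_{z ∈ 𝔻ⁿ} |P_m(z)| ≤ 1 − |P_0|², where P_0 = P(0). -/

import Mathlib

open Finset Metric Set

lemma eval_mul_homog {n : ℕ} {φ : MvPolynomial (Fin n) ℂ} {j : ℕ}
    (hφ : φ.IsHomogeneous j) (w : ℂ) (z : Fin n → ℂ) :
    MvPolynomial.eval (fun i => w * z i) φ = w ^ j * MvPolynomial.eval z φ := by
  rw [MvPolynomial.eval_eq', MvPolynomial.eval_eq', Finset.mul_sum]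
  refine Finset.sum_congr rfl fun d hd => ?_
  have hdeg : d.degree = j := by
    by_contra h
    exact (MvPolynomial.mem_support_iff.mp hd) (hφ.coeff_eq_zero h)
  have hsum : ∑ i, d i = j := by
    rw [← hdeg, Finsupp.degree]
    exact (Finset.sum_subset (Finset.subset_univ _)
      (fun i _ hi => Finsupp.notMem_support_iff.mp hi)).symm
  have : ∏ i, (w * z i) ^ d i = w ^ j * ∏ i, z i ^ d i := by
    simp_rw [mul_pow]
    rw [Finset.prod_mul_distrib, Finset.prod_pow_eq_pow_sum, hsum]
  rw [this]; ring

lemma schwarz_pick_zero {F : ℂ → ℂ} (hd : Differentiable ℂ F)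
    (hb : ∀ u : ℂ, ‖u‖ < 1 → ‖F u‖ ≤ 1) :
    ‖deriv F 0‖ ≤ 1 - ‖F 0‖ ^ 2 := by
  have h0 : ‖F 0‖ ≤ 1 := hb 0 (by simp)
  rcases lt_or_eq_of_le h0 with h1 | h1
  · -- |F 0| < 1
    set b := F 0 with hb0
    set G : ℂ → ℂ := fun u => (F u - b) / (1 - (starRingEnd ℂ) b * F u) with hG
    have hden : ∀ u : ℂ, ‖u‖ < 1 → (1 - (starRingEnd ℂ) b * F u) ≠ 0 := by
      intro u hu h
      have h2 : ‖(starRingEnd ℂ) b * F u‖ < 1 := by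
        rw [norm_mul, Complex.norm_conj]
        nlinarith [norm_nonneg b, norm_nonneg (F u), hb u hu]
      have : (starRingEnd ℂ) b * F u = 1 := by linear_combination -h
      rw [this] at h2; simp at h2
    have hnormsq : ∀ w : ℂ, Complex.normSq (1 - (starRingEnd ℂ) b * w) -
        Complex.normSq (w - b) = (1 - Complex.normSq b) * (1 - Complex.normSq w) := by
      intro w
      simp only [Complex.normSq_apply, Complex.sub_re, Complex.sub_im, Complex.mul_re,
        Complex.mul_im, Complex.one_re, Complex.one_im, Complex.conj_re, Complex.conj_im]
      ring
    have hGle : ∀ u : ℂ, ‖u‖ < 1 → ‖G u‖ ≤ 1 := by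
      intro u hu
      rw [hG]
      simp only [norm_div]
      rw [div_le_one_iff]
      left
      constructor
      · exact (norm_pos_iff.mpr (hden u hu))
      · have h1' : Complex.normSq (F u - b) ≤ Complex.normSq (1 - (starRingEnd ℂ) b * F u) := by
          have := hnormsq (F u)
          have hb1 : Complex.normSq b ≤ 1 := by
            rw [← Complex.sq_norm]; nlinarith [norm_nonneg b]
          have hF1 : Complex.normSq (F u) ≤ 1 := by
            rw [← Complex.sq_norm]; nlinarith [norm_nonneg (F u), hb u hu]
          nlinarith
        rw [Complex.norm_def, Complex.norm_def]
        exact Real.sqrt_le_sqrt h1'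
    have hGd : DifferentiableOn ℂ G (ball (0:ℂ) 1) := by
      apply DifferentiableOn.div
      · exact (hd.differentiableOn).sub_const b
      · exact (differentiableOn_const _).sub ((differentiableOn_const _).mul hd.differentiableOn)
      · intro u hu; exact hden u (by simpa [Complex.norm_def] using mem_ball_zero_iff.mp hu)
    have hG0 : G 0 = 0 := by simp [hG, hb0]
    have hG1 : ‖deriv G 0‖ ≤ 1 := by
      refine le_of_forall_pos_le_add fun ε hε => ?_
      have hmaps : MapsTo G (ball (0:ℂ) 1) (ball (G 0) (1 + ε)) := by
        intro u hu
        rw [mem_ball, hG0, dist_zero_right]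
        calc ‖G u‖ ≤ 1 := hGle u (by simpa using mem_ball_zero_iff.mp hu)
          _ < 1 + ε := by linarith
      have := Complex.norm_deriv_le_div_of_mapsTo_ball hGd (hmaps.mono_right ball_subset_closedBall) one_pos
      simpa using this
    have hd0 : (1 : ℂ) - (starRingEnd ℂ) b * b ≠ 0 := by
      have := hden 0 (by simp)
      rwa [← hb0] at this
    have hdF : deriv G 0 = deriv F 0 / (1 - (starRingEnd ℂ) b * b) := by
      have hfd : DifferentiableAt ℂ (fun u => F u - b) 0 := (hd 0).sub_const b
      have hgd : DifferentiableAt ℂ (fun u => (1:ℂ) - (starRingEnd ℂ) b * F u) 0 :=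
        (differentiableAt_const _).sub ((differentiableAt_const _).mul (hd 0))
      have hg0 : (1:ℂ) - (starRingEnd ℂ) b * F 0 ≠ 0 := by rwa [← hb0]
      rw [hG]
      rw [deriv_fun_div hfd hgd hg0]
      rw [deriv_sub_const, ← hb0, sub_self, zero_mul, sub_zero, sq]
      rw [mul_div_assoc, div_mul_cancel_left₀ hd0, ← div_eq_mul_inv]
    have habs1 : ‖(1:ℂ) - (starRingEnd ℂ) b * b‖ = 1 - ‖b‖ ^ 2 := by
      have h2 : (starRingEnd ℂ) b * b = (Complex.normSq b : ℂ) := by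
        rw [mul_comm, Complex.mul_conj]
      rw [h2]
      have h3 : ((1:ℂ) - (Complex.normSq b : ℂ)) = ((1 - Complex.normSq b : ℝ) : ℂ) := by
        push_cast; ring
      rw [h3, Complex.norm_real, Real.norm_eq_abs, ← Complex.sq_norm, abs_of_nonneg]
      nlinarith [norm_nonneg b]
    have : ‖deriv F 0‖ = ‖deriv G 0‖ *
        ‖(1:ℂ) - (starRingEnd ℂ) b * b‖ := by
      rw [hdF, norm_div, div_mul_cancel₀]
      exact norm_ne_zero_iff.mpr hd0
    rw [this, habs1]
    have hb2 : 0 ≤ 1 - ‖b‖ ^ 2 := by nlinarith [norm_nonneg b]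
    calc ‖deriv G 0‖ * (1 - ‖b‖ ^ 2) ≤ 1 * (1 - ‖b‖ ^ 2) :=
        mul_le_mul_of_nonneg_right hG1 hb2
      _ = 1 - ‖F 0‖ ^ 2 := by rw [one_mul, hb0]
  · -- |F 0| = 1 : maximum modulus, F is constant near 0
    have hmax : IsMaxOn (norm ∘ F) (ball (0:ℂ) 1) 0 := by
      intro u hu
      simp only [Function.comp_apply]
      calc ‖F u‖ ≤ 1 := hb u (by simpa using mem_ball_zero_iff.mp hu)
        _ = ‖F 0‖ := h1.symm
    have heq := Complex.eqOn_of_isPreconnected_of_isMaxOn_norm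
      (convex_ball (0:ℂ) 1).isPreconnected isOpen_ball hd.differentiableOn
      (mem_ball_self one_pos) hmax
    have hder : deriv F 0 = 0 := by
      have hev : F =ᶠ[nhds (0:ℂ)] fun _ => F 0 := by
        filter_upwards [isOpen_ball.mem_nhds (mem_ball_self one_pos)] with x hx using heq hx
      rw [hev.deriv_eq, deriv_const]
    rw [hder]
    simp only [norm_zero, h1]
    norm_num

theorem wiener_lemma {n : ℕ} (P : MvPolynomial (Fin n) ℂ)
    (hP : ∀ z : Fin n → ℂ, (∀ i, ‖z i‖ < 1) →
      ‖MvPolynomial.eval z P‖ ≤ 1) :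
    ∀ m : ℕ, 0 < m → ∀ z : Fin n → ℂ, (∀ i, ‖z i‖ < 1) →
      ‖MvPolynomial.eval z (MvPolynomial.homogeneousComponent m P)‖ ≤
        1 - ‖MvPolynomial.coeff 0 P‖ ^ 2 := by
  intro m hm z hz
  set N := P.totalDegree with hN
  set a : ℕ → ℂ := fun j => MvPolynomial.eval z (MvPolynomial.homogeneousComponent j P) with ha
  have ha_zero : ∀ j, N < j → a j = 0 := by
    intro j hj
    simp [ha, MvPolynomial.homogeneousComponent_eq_zero _ _ hj]
  have hA : ∀ w : ℂ, MvPolynomial.eval (fun i => w * z i) P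
      = ∑ j ∈ Finset.range (N + 1), a j * w ^ j := by
    intro w
    conv_lhs => rw [← MvPolynomial.sum_homogeneousComponent P]
    rw [map_sum]
    refine Finset.sum_congr rfl fun j _ => ?_
    rw [eval_mul_homog (MvPolynomial.homogeneousComponent_isHomogeneous j P) w z, mul_comm]
  have hc0 : ‖MvPolynomial.coeff 0 P‖ ≤ 1 := by
    have h := hP (fun _ => 0) (fun i => by simp)
    have he : MvPolynomial.eval (fun _ => (0:ℂ)) P = MvPolynomial.coeff 0 P := by
      rw [MvPolynomial.eval_zero']
      rfl
    rwa [he] at h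
  have ha0c : a 0 = MvPolynomial.coeff 0 P := by
    simp [ha, MvPolynomial.homogeneousComponent_zero]
  by_cases hmN : N < m
  · rw [show MvPolynomial.homogeneousComponent m P = 0 from
      MvPolynomial.homogeneousComponent_eq_zero _ _ hmN]
    simp only [map_zero, norm_zero]
    nlinarith [norm_nonneg (MvPolynomial.coeff 0 P)]
  · push_neg at hmN
    set ζ : ℂ := Complex.exp (2 * Real.pi * Complex.I / m) with hzeta
    have hζ : IsPrimitiveRoot ζ m := Complex.isPrimitiveRoot_exp m hm.ne'
    have hζabs : ‖ζ‖ = 1 := by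
      have h : (2 * (Real.pi:ℂ) * Complex.I / (m:ℂ)) = ((2 * Real.pi / m : ℝ) : ℂ) * Complex.I := by
        push_cast; ring
      rw [hzeta, h, Complex.norm_exp_ofReal_mul_I]
    have hrou : ∀ j : ℕ, ∑ k ∈ Finset.range m, (ζ ^ j) ^ k = if m ∣ j then (m:ℂ) else 0 := by
      intro j
      by_cases hdvd : m ∣ j
      · rw [if_pos hdvd]
        have h1 : ζ ^ j = 1 := (hζ.pow_eq_one_iff_dvd j).mpr hdvd
        simp [h1]
      · rw [if_neg hdvd]
        have h1 : ζ ^ j ≠ 1 := fun h => hdvd ((hζ.pow_eq_one_iff_dvd j).mp h)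
        rw [geom_sum_eq h1]
        have h2 : (ζ ^ j) ^ m = 1 := by
          rw [← pow_mul, mul_comm, pow_mul, hζ.pow_eq_one, one_pow]
        rw [h2, sub_self, zero_div]
    set q : Polynomial ℂ :=
      ∑ j ∈ Finset.range (N + 1), Polynomial.C (a (m * j)) * Polynomial.X ^ j with hq
    set F : ℂ → ℂ := fun u => Polynomial.eval u q with hFdef
    have hFu : ∀ u : ℂ, F u = ∑ j ∈ Finset.range (N + 1), a (m * j) * u ^ j := by
      intro u
      simp [hFdef, hq, Polynomial.eval_finset_sum]
    have hFd : Differentiable ℂ F := q.differentiable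
    have hreidx : ∀ w : ℂ,
        ∑ j ∈ Finset.range (N + 1), (if m ∣ j then a j * w ^ j else 0) = F (w ^ m) := by
      intro w
      rw [hFu]
      rw [Finset.sum_ite, Finset.sum_const_zero, add_zero]
      have hsub : ∑ j' ∈ Finset.range (N + 1), a (m * j') * (w ^ m) ^ j'
          = ∑ j' ∈ (Finset.range (N + 1)).filter (fun j' => m * j' ≤ N),
              a (m * j') * (w ^ m) ^ j' := by
        refine (Finset.sum_subset (Finset.filter_subset _ _) ?_).symm
        intro x hx hnx
        have : N < m * x := by
          by_contra h
          exact hnx (Finset.mem_filter.mpr ⟨hx, not_lt.mp h⟩)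
        rw [ha_zero _ this, zero_mul]
      rw [hsub]
      refine Finset.sum_bij' (fun j _ => j / m) (fun j' _ => m * j') ?_ ?_ ?_ ?_ ?_
      · intro j hj
        rw [Finset.mem_filter] at hj ⊢
        obtain ⟨hj1, hj2⟩ := hj
        rw [Finset.mem_range] at hj1
        have hjm : m * (j / m) = j := Nat.mul_div_cancel' hj2
        constructor
        · rw [Finset.mem_range]
          exact lt_of_le_of_lt (Nat.div_le_self j m) hj1
        · rw [hjm]; omega
      · intro j' hj'
        rw [Finset.mem_filter, Finset.mem_range] at hj' ⊢
        obtain ⟨hj1, hj2⟩ := hj'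
        exact ⟨by omega, Dvd.intro _ rfl⟩
      · intro j hj
        rw [Finset.mem_filter] at hj
        exact Nat.mul_div_cancel' hj.2
      · intro j' hj'
        exact Nat.mul_div_cancel_left j' hm
      · intro j hj
        rw [Finset.mem_filter] at hj
        rw [Nat.mul_div_cancel' hj.2, ← pow_mul]
        rw [Nat.mul_div_cancel' hj.2]
    have hmne : (m:ℂ) ≠ 0 := Nat.cast_ne_zero.mpr hm.ne'
    have hswap : ∀ w : ℂ, ∑ k ∈ Finset.range m,
        MvPolynomial.eval (fun i => (ζ ^ k * w) * z i) P = (m:ℂ) * F (w ^ m) := by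
      intro w
      calc ∑ k ∈ Finset.range m, MvPolynomial.eval (fun i => (ζ ^ k * w) * z i) P
          = ∑ k ∈ Finset.range m, ∑ j ∈ Finset.range (N + 1), a j * (ζ ^ k * w) ^ j :=
            Finset.sum_congr rfl fun k _ => hA _
        _ = ∑ j ∈ Finset.range (N + 1), ∑ k ∈ Finset.range m, a j * (ζ ^ k * w) ^ j :=
            Finset.sum_comm
        _ = ∑ j ∈ Finset.range (N + 1), (a j * w ^ j) * ∑ k ∈ Finset.range m, (ζ ^ j) ^ k := by
            refine Finset.sum_congr rfl fun j _ => ?_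
            rw [Finset.mul_sum]
            refine Finset.sum_congr rfl fun k _ => ?_
            rw [mul_pow, ← pow_mul, mul_comm k j, pow_mul]
            ring
        _ = ∑ j ∈ Finset.range (N + 1), (if m ∣ j then (m:ℂ) * (a j * w ^ j) else 0) := by
            refine Finset.sum_congr rfl fun j _ => ?_
            rw [hrou j]
            split_ifs <;> ring
        _ = (m:ℂ) * ∑ j ∈ Finset.range (N + 1), (if m ∣ j then a j * w ^ j else 0) := by
            rw [Finset.mul_sum]
            refine Finset.sum_congr rfl fun j _ => ?_
            split_ifs <;> ring
        _ = (m:ℂ) * F (w ^ m) := by rw [hreidx]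
    have hB : ∀ u : ℂ, ‖u‖ < 1 → ‖F u‖ ≤ 1 := by
      intro u hu
      obtain ⟨w, hw1, hwm⟩ : ∃ w : ℂ, ‖w‖ < 1 ∧ w ^ m = u := by
        rcases eq_or_ne u 0 with rfl | hu0
        · exact ⟨0, by simp, zero_pow hm.ne'⟩
        · refine ⟨Complex.exp (Complex.log u / m), ?_, ?_⟩
          · rw [Complex.norm_exp]
            have hre : (Complex.log u / (m:ℂ)).re = Real.log (‖u‖) / m := by
              rw [show ((m:ℂ)) = ((m:ℝ):ℂ) by push_cast; rfl, Complex.div_ofReal_re,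
                Complex.log_re]
            rw [hre]
            have habs : 0 < ‖u‖ := norm_pos_iff.mpr hu0
            have : Real.log (‖u‖) < 0 := Real.log_neg habs hu
            have hmr : (0:ℝ) < m := by exact_mod_cast hm
            exact Real.exp_lt_one_iff.mpr (div_neg_of_neg_of_pos this hmr)
          · rw [← Complex.exp_nat_mul, mul_div_cancel₀ _ hmne, Complex.exp_log hu0]
      rw [← hwm]
      have h1 : F (w ^ m) = (m:ℂ)⁻¹ * ∑ k ∈ Finset.range m,
          MvPolynomial.eval (fun i => (ζ ^ k * w) * z i) P := by
        rw [hswap, inv_mul_cancel_left₀ hmne]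
      rw [h1, norm_mul, norm_inv, Complex.norm_natCast]
      have hle : ‖∑ k ∈ Finset.range m,
          MvPolynomial.eval (fun i => (ζ ^ k * w) * z i) P‖ ≤ (m:ℝ) := by
        calc ‖∑ k ∈ Finset.range m,
            MvPolynomial.eval (fun i => (ζ ^ k * w) * z i) P‖
            ≤ ∑ k ∈ Finset.range m, ‖MvPolynomial.eval (fun i => (ζ ^ k * w) * z i) P‖ :=
              norm_sum_le _ _
          _ ≤ ∑ _k ∈ Finset.range m, (1:ℝ) := by
              refine Finset.sum_le_sum fun k _ => ?_
              refine hP _ fun i => ?_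
              rw [norm_mul, norm_mul, norm_pow, hζabs, one_pow, one_mul]
              nlinarith [norm_nonneg w, norm_nonneg (z i), hw1, hz i]
          _ = (m:ℝ) := by simp
      have hmr : (0:ℝ) < m := by exact_mod_cast hm
      calc (↑m)⁻¹ * ‖∑ k ∈ Finset.range m,
          MvPolynomial.eval (fun i => (ζ ^ k * w) * z i) P‖ ≤ (↑m)⁻¹ * (m:ℝ) :=
            mul_le_mul_of_nonneg_left hle (by positivity)
        _ = 1 := inv_mul_cancel₀ hmr.ne'
    have hsp := schwarz_pick_zero hFd hB
    have hF0 : F 0 = MvPolynomial.coeff 0 P := by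
      rw [hFu 0, Finset.sum_eq_single 0]
      · rw [mul_zero, pow_zero, mul_one, ha0c]
      · intro j _ hj
        rw [zero_pow hj, mul_zero]
      · intro h
        exact absurd (Finset.mem_range.mpr (by omega)) h
    have hderiv : deriv F 0 = a m := by
      rw [hFdef]
      rw [Polynomial.deriv]
      rw [← Polynomial.coeff_zero_eq_eval_zero, Polynomial.coeff_derivative]
      norm_num
      rw [hq, Polynomial.finset_sum_coeff]
      rw [Finset.sum_eq_single 1]
      · simp [Polynomial.coeff_C_mul, Polynomial.coeff_X_pow]
      · intro j _ hj
        simp [Polynomial.coeff_C_mul, Polynomial.coeff_X_pow, Ne.symm hj]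
      · intro h
        exact absurd (Finset.mem_range.mpr (by omega)) h
    rw [hF0, hderiv] at hsp
    exact hsp
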